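/- Let p be an odd prime and let G_E be the multi-EGS group defined by a datum E = (E^{(1)},…,E^{(p)}). Then G_E is a contracting group whose nucleus is N_E = ⟨a⟩ ∪ ⋃_{l=1}^{p} ⟨b^{(l)}_i : 1 ≤ i ≤ r_l⟩, i.e., N_E is the inclusion-minimal finite subset N ⊆ G_E with the property that there exists k ≥ 1 such that for every product n₁n₂ of two elements of S ∪ N (where S is the symmetric generating set ⟨a⟩ ∪ ⋃_l ⟨b^{(l)}_i⟩) and every word v ∈ X^k, the section (n₁n₂)|_v lies in N. -/

import Mathlib

/-- An automorphism of the rooted `p`-ary tree, encoded by its portrait: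
at every vertex (a finite word over `Fin p`) it records the permutation of the
`p` subtrees hanging at that vertex. -/
@[ext]
structure TreeAut (p : ℕ) where
  perm : List (Fin p) → Equiv.Perm (Fin p)

namespace TreeAut

variable {p : ℕ}

/-- The section of a tree automorphism at a first-level vertex `x`. -/
def sect (g : TreeAut p) (x : Fin p) : TreeAut p := ⟨fun v => g.perm (x :: v)⟩

/-- The section of a tree automorphism at an arbitrary vertex. -/
def sectV (g : TreeAut p) : List (Fin p) → TreeAut p
  | [] => g
  | x :: v => (g.sect x).sectV v

/-- The action of a tree automorphism on vertices (finite words over `Fin p`). -/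
def act (g : TreeAut p) : List (Fin p) → List (Fin p)
  | [] => []
  | x :: v => g.perm [] x :: (g.sect x).act v

/-- The inverse of the action of a tree automorphism on vertices. -/
def actInv (g : TreeAut p) : List (Fin p) → List (Fin p)
  | [] => []
  | x :: v => (g.perm []).symm x :: (g.sect ((g.perm []).symm x)).actInv v

instance : One (TreeAut p) := ⟨⟨fun _ => 1⟩⟩

/-- Composition convention as in the paper: `g * h` acts by `g` first, then `h`. -/
instance : Mul (TreeAut p) := ⟨fun g h => ⟨fun v => (g.perm v).trans (h.perm (g.act v))⟩⟩

instance : Inv (TreeAut p) := ⟨fun g => ⟨fun v => (g.perm (g.actInv v)).symm⟩⟩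

theorem perm_one (v : List (Fin p)) : (1 : TreeAut p).perm v = 1 := rfl

theorem perm_mul (g h : TreeAut p) (v : List (Fin p)) :
    (g * h).perm v = (g.perm v).trans (h.perm (g.act v)) := rfl

theorem perm_inv (g : TreeAut p) (v : List (Fin p)) :
    (g⁻¹).perm v = (g.perm (g.actInv v)).symm := rfl

theorem sect_one (x : Fin p) : (1 : TreeAut p).sect x = 1 := rfl

theorem sect_mul (g h : TreeAut p) (x : Fin p) :
    (g * h).sect x = g.sect x * h.sect (g.perm [] x) := rfl

theorem sect_inv (g : TreeAut p) (x : Fin p) :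
    (g⁻¹).sect x = (g.sect ((g.perm []).symm x))⁻¹ := rfl

theorem act_one : ∀ v : List (Fin p), (1 : TreeAut p).act v = v
  | [] => rfl
  | x :: v => by
    show (1 : Equiv.Perm (Fin p)) x :: ((1 : TreeAut p).sect x).act v = x :: v
    rw [sect_one, act_one v]
    rfl

theorem act_mul : ∀ (v : List (Fin p)) (g h : TreeAut p), (g * h).act v = h.act (g.act v)
  | [], _, _ => rfl
  | x :: v, g, h => by
    show (g * h).perm [] x :: ((g * h).sect x).act v = _
    rw [sect_mul, act_mul v]
    rfl

theorem act_inv : ∀ (v : List (Fin p)) (g : TreeAut p), (g⁻¹).act v = g.actInv v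
  | [], _ => rfl
  | x :: v, g => by
    show (g⁻¹).perm [] x :: ((g⁻¹).sect x).act v = _
    rw [sect_inv, act_inv v]
    rfl

instance : Group (TreeAut p) where
  mul_assoc g h k := by
    ext v y
    simp [perm_mul, act_mul, Equiv.trans_apply]
  one_mul g := by
    ext v y
    simp [perm_mul, perm_one, act_one]
  mul_one g := by
    ext v y
    simp [perm_mul, perm_one]
  inv_mul_cancel g := by
    ext v y
    simp [perm_mul, perm_inv, perm_one, act_inv]

end TreeAut

/-- The rooted automorphism `a = (1,…,1)ε`, where `ε = (0 1 … p-1)` is the cyclic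
rotation `x ↦ x + 1` of `Fin p`. -/
def rot (p : ℕ) [NeZero p] : TreeAut p :=
  ⟨fun v => if v = [] then Equiv.addRight (1 : Fin p) else 1⟩

/-- The components of a defining vector `v ∈ (ℤ/pℤ)^{p-1}`, read `p`-periodically:
for `1 ≤ n ≤ p-1`, `vcomp v n` is the `n`-th component of `v` (and `vcomp v n = 0`
when `n ≡ 0 mod p`). -/
def vcomp {p : ℕ} [NeZero p] (v : Fin (p - 1) → ZMod p) (n : ℕ) : ZMod p :=
  if h : n % p = 0 then 0
  else v ⟨n % p - 1, by
    have h2 : n % p < p := Nat.mod_lt _ (Nat.pos_of_ne_zero (NeZero.ne p))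
    omega⟩

/-- `N` is a quasinucleus with constant `k` for the self-similar group generated by the
symmetric set `S`: all sections at level `k` of products of two elements of `S ∪ N` lie in `N`. -/
def IsQuasiNucleusWith (p : ℕ) (S N : Set (TreeAut p)) (k : ℕ) : Prop :=
  ∀ n₁ ∈ S ∪ N, ∀ n₂ ∈ S ∪ N, ∀ v : List (Fin p), v.length = k → (n₁ * n₂).sectV v ∈ N

/-- `N` is the nucleus of the group `G` with symmetric generating set `S`:
`N` is the inclusion-minimal finite subset of `G` that is a quasinucleus for some
level constant `k ≥ 1`. -/
def IsNucleusOf (p : ℕ) (S : Set (TreeAut p)) (G : Subgroup (TreeAut p)) (N : Set (TreeAut p)) : Prop :=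
  (N ⊆ (G : Set (TreeAut p)) ∧ N.Finite ∧ ∃ k, 1 ≤ k ∧ IsQuasiNucleusWith p S N k) ∧
  ∀ N' : Set (TreeAut p), N' ⊆ (G : Set (TreeAut p)) → N'.Finite →
    (∃ k, 1 ≤ k ∧ IsQuasiNucleusWith p S N' k) → N ⊆ N'
/-- The defining wreath recursions of the generators of a multi-EGS group with datum
`E = (E^(1),…,E^(p))`: here Lean's `l : Fin p` stands for the paper's `l = l.val + 1`,
the vector `e l i : Fin (p-1) → ZMod p` is `e^(l)_i` (Lean's `n : Fin (p-1)` standing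
for the component index `n = n.val + 1 ∈ {1,…,p-1}`), each `E^(l)` consists of `r l`
linearly independent vectors, at least one `r l` is positive, and the generator
`b l i = b^(l)_i` fixes all first-level vertices, has section `b^(l)_i` at the vertex
`l - 1` and section `a^{e^(l)_{i,n}}` at the vertex `l - 1 + n (mod p)` for `1 ≤ n ≤ p-1`. -/
def IsMultiEGSDatum (p : ℕ) [NeZero p] {r : Fin p → ℕ}
    (e : ∀ l : Fin p, Fin (r l) → Fin (p - 1) → ZMod p)
    (b : ∀ l : Fin p, Fin (r l) → TreeAut p) : Prop :=
  (∃ l, 0 < r l) ∧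
  (∀ l, LinearIndependent (ZMod p) (e l)) ∧
  (∀ (l : Fin p) (i : Fin (r l)),
    (∀ x : Fin p, (b l i).act [x] = [x]) ∧
    (b l i).sect l = b l i ∧
    ∀ n : Fin (p - 1),
      (b l i).sect (l + Fin.ofNat p (n.val + 1 : ℕ)) = rot p ^ (e l i n).val)

/-- The generating set `{a} ∪ {b^(l)_i}` of a multi-EGS group. -/
def multiEGSGens (p : ℕ) [NeZero p] {r : Fin p → ℕ}
    (b : ∀ l : Fin p, Fin (r l) → TreeAut p) : Set (TreeAut p) :=
  insert (rot p) {g | ∃ l i, b l i = g}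

/-- The multi-EGS group `G_E = ⟨a, b^(l)_i⟩`. -/
def multiEGS (p : ℕ) [NeZero p] {r : Fin p → ℕ}
    (b : ∀ l : Fin p, Fin (r l) → TreeAut p) : Subgroup (TreeAut p) :=
  Subgroup.closure (multiEGSGens p b)

theorem rot_mem_multiEGS (p : ℕ) [NeZero p] {r : Fin p → ℕ}
    (b : ∀ l : Fin p, Fin (r l) → TreeAut p) : rot p ∈ multiEGS p b :=
  Subgroup.subset_closure (Set.mem_insert _ _)

theorem b_mem_multiEGS (p : ℕ) [NeZero p] {r : Fin p → ℕ}
    (b : ∀ l : Fin p, Fin (r l) → TreeAut p) (l : Fin p) (i : Fin (r l)) :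
    b l i ∈ multiEGS p b :=
  Subgroup.subset_closure (Set.mem_insert_of_mem _ ⟨l, i, rfl⟩)

/-- The subgroup `B_l = ⟨b^(l)_1, …, b^(l)_{r_l}⟩`. -/
def Bsub (p : ℕ) [NeZero p] {r : Fin p → ℕ}
    (b : ∀ l : Fin p, Fin (r l) → TreeAut p) (l : Fin p) : Subgroup (TreeAut p) :=
  Subgroup.closure {g | ∃ i, b l i = g}

/-- The set `N_E = ⟨a⟩ ∪ ⋃_{l=1}^p B_l`. -/
def nucleusSet (p : ℕ) [NeZero p] {r : Fin p → ℕ}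
    (b : ∀ l : Fin p, Fin (r l) → TreeAut p) : Set (TreeAut p) :=
  (Subgroup.zpowers (rot p) : Set (TreeAut p)) ∪
    ⋃ l : Fin p, (Bsub p b l : Set (TreeAut p))

section Aux

variable {p : ℕ} [NeZero p]

lemma TreeAut.act_nil (g : TreeAut p) : g.act [] = [] := rfl

lemma perm_nil_mul {g h : TreeAut p} (hg : g.perm [] = 1) (hh : h.perm [] = 1) :
    (g * h).perm [] = 1 := by
  ext y
  simp [TreeAut.perm_mul, TreeAut.act_nil, hg, hh]

lemma perm_nil_pow {g : TreeAut p} (hg : g.perm [] = 1) : ∀ n, (g ^ n).perm [] = 1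
  | 0 => rfl
  | n + 1 => by
    rw [pow_succ]
    exact perm_nil_mul (perm_nil_pow hg n) hg

lemma sect_pow {g : TreeAut p} (hg : g.perm [] = 1) (x : Fin p) :
    ∀ n, (g ^ n).sect x = g.sect x ^ n
  | 0 => rfl
  | n + 1 => by
    rw [pow_succ, TreeAut.sect_mul, perm_nil_pow hg n]
    simp [sect_pow hg x n, pow_succ]

lemma rot_sect (x : Fin p) : (rot p).sect x = 1 := by
  ext v y
  simp [rot, TreeAut.sect, TreeAut.perm_one]

lemma rot_pow_sect : ∀ (n : ℕ) (x : Fin p), ((rot p) ^ n).sect x = 1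
  | 0, x => rfl
  | n + 1, x => by
    rw [pow_succ, TreeAut.sect_mul, rot_pow_sect n, rot_sect, one_mul]

lemma rot_perm_nil : (rot p).perm [] = Equiv.addRight (1 : Fin p) := by simp [rot]

open Fin.NatCast in
lemma rot_pow_perm_nil : ∀ n : ℕ, ((rot p) ^ n).perm [] = Equiv.addRight ((n : Fin p))
  | 0 => by
    ext y; simp [TreeAut.perm_one]
  | n + 1 => by
    rw [pow_succ, TreeAut.perm_mul, TreeAut.act_nil, rot_pow_perm_nil n, rot_perm_nil]
    ext y
    simp [add_assoc]

open Fin.NatCast in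
lemma rot_pow_p : (rot p) ^ p = 1 := by
  apply TreeAut.ext
  funext v
  cases v with
  | nil =>
    rw [TreeAut.perm_one, rot_pow_perm_nil]
    ext y
    simp [Fin.natCast_self]
  | cons x w => exact congrArg (fun t => t.perm w) (rot_pow_sect p x)

lemma rot_zpow_congr {s t : ℤ} (h : ((s : ZMod p)) = ((t : ZMod p))) :
    (rot p) ^ s = (rot p) ^ t := by
  obtain ⟨q, hq⟩ : (p : ℤ) ∣ s - t := by
    have := (ZMod.intCast_zmod_eq_zero_iff_dvd (s - t) p).mp (by push_cast; rw [h]; ring)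
    exact this
  have hs : s = t + (p : ℤ) * q := by linarith [hq]
  rw [hs, zpow_add, zpow_mul, zpow_natCast, rot_pow_p, one_zpow, mul_one]

lemma rot_pow_congr_int {s : ℕ} {j : ℤ} (h : ((s : ZMod p)) = ((j : ZMod p))) :
    (rot p) ^ s = (rot p) ^ j := by
  rw [← zpow_natCast]
  exact rot_zpow_congr (by push_cast; exact h)

lemma mem_zpowers_rot_iff (g : TreeAut p) :
    g ∈ Subgroup.zpowers (rot p) ↔ ∃ m : ℕ, (rot p) ^ m = g := by
  constructor
  · intro hg
    obtain ⟨j, rfl⟩ := Subgroup.mem_zpowers_iff.mp hg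
    refine ⟨((j : ZMod p)).val, ?_⟩
    apply rot_pow_congr_int
    simp [ZMod.natCast_val, ZMod.cast_id]
  · rintro ⟨m, rfl⟩
    exact Subgroup.mem_zpowers_iff.mpr ⟨(m : ℤ), by rw [zpow_natCast]⟩

lemma zpowers_sect {g : TreeAut p} (hg : g ∈ Subgroup.zpowers (rot p)) (x : Fin p) :
    g.sect x = 1 := by
  obtain ⟨m, rfl⟩ := (mem_zpowers_rot_iff g).mp hg
  exact rot_pow_sect m x

lemma zpowers_rot_finite : (Subgroup.zpowers (rot p) : Set (TreeAut p)).Finite := by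
  have h : IsOfFinOrder (rot p) :=
    isOfFinOrder_iff_pow_eq_one.mpr ⟨p, Nat.pos_of_ne_zero (NeZero.ne p), rot_pow_p⟩
  exact h.finite_zpowers

lemma perm_nil_of_act (g : TreeAut p) (hact : ∀ x : Fin p, g.act [x] = [x]) :
    g.perm [] = 1 := by
  ext y
  have h := hact y
  simp [TreeAut.act, TreeAut.sect] at h
  exact congrArg Fin.val h

lemma eq_of_matching (l : Fin p) {g h : TreeAut p} (hg1 : g.perm [] = 1)
    (hh1 : h.perm [] = 1) (hgl : g.sect l = g) (hhl : h.sect l = h)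
    (ho : ∀ x, x ≠ l → g.sect x = h.sect x) : g = h := by
  have key : ∀ v, g.perm v = h.perm v := by
    intro v
    induction v with
    | nil => rw [hg1, hh1]
    | cons x w ih =>
      by_cases hx : x = l
      · subst hx
        calc g.perm (x :: w) = (g.sect x).perm w := rfl
          _ = g.perm w := by rw [hgl]
          _ = h.perm w := ih
          _ = (h.sect x).perm w := by rw [hhl]
          _ = h.perm (x :: w) := rfl
      · calc g.perm (x :: w) = (g.sect x).perm w := rfl
          _ = (h.sect x).perm w := by rw [ho x hx]
          _ = h.perm (x :: w) := rfl
  exact TreeAut.ext (funext key)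

lemma Bsub_inv (hp2 : 2 ≤ p) {r : Fin p → ℕ}
    (e : ∀ l : Fin p, Fin (r l) → Fin (p - 1) → ZMod p)
    (b : ∀ l : Fin p, Fin (r l) → TreeAut p)
    (hdatum : IsMultiEGSDatum p e b) (l : Fin p) :
    ∀ g ∈ Bsub p b l,
      g.perm [] = 1 ∧ g.sect l = g ∧
        ∀ x, x ≠ l → g.sect x ∈ Subgroup.zpowers (rot p) := by
  intro g hg
  induction hg using Subgroup.closure_induction with
  | mem g hgen =>
    obtain ⟨i, rfl⟩ := hgen
    obtain ⟨hact, hsl, hsn⟩ := hdatum.2.2 l i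
    refine ⟨perm_nil_of_act _ hact, hsl, ?_⟩
    intro x hx
    have hd : x - l ≠ 0 := sub_ne_zero.mpr hx
    have hdv : (x - l).val ≠ 0 := fun h0 => hd (Fin.ext (by simp [h0]))
    have hlt := (x - l).isLt
    set n : Fin (p - 1) := ⟨(x - l).val - 1, by omega⟩ with hn
    have hxeq : x = l + Fin.ofNat p (n.val + 1 : ℕ) := by
      have h1 : Fin.ofNat p (n.val + 1 : ℕ) = x - l := by
        have h2 : n.val + 1 = (x - l).val := by simp [hn]; omega
        rw [h2, Fin.ofNat_val_eq_self]
      rw [h1]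
      rw [add_sub_cancel]
    rw [hxeq, hsn n]
    exact Subgroup.pow_mem _ (Subgroup.mem_zpowers _) _
  | one =>
    exact ⟨rfl, rfl, fun x hx => by rw [TreeAut.sect_one]; exact one_mem _⟩
  | mul g h hgm hhm ihg ihh =>
    obtain ⟨hg1, hgl, hgo⟩ := ihg
    obtain ⟨hh1, hhl, hho⟩ := ihh
    refine ⟨perm_nil_mul hg1 hh1, ?_, ?_⟩
    · rw [TreeAut.sect_mul, hg1]
      simp [hgl, hhl]
    · intro x hx
      rw [TreeAut.sect_mul, hg1]
      simp only [Equiv.Perm.coe_one, id_eq]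
      exact mul_mem (hgo x hx) (hho x hx)
  | inv g hgm ihg =>
    obtain ⟨hg1, hgl, hgo⟩ := ihg
    have h1 : (g⁻¹).perm [] = 1 := by
      rw [TreeAut.perm_inv]
      show (g.perm []).symm = 1
      rw [hg1]; rfl
    refine ⟨h1, ?_, ?_⟩
    · rw [TreeAut.sect_inv, hg1]
      have h2 : ((1 : Equiv.Perm (Fin p))).symm l = l := rfl
      rw [h2, hgl]
    · intro x hx
      rw [TreeAut.sect_inv, hg1]
      have h2 : ((1 : Equiv.Perm (Fin p))).symm x = x := rfl
      rw [h2]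
      exact inv_mem (hgo x hx)

lemma Bsub_finite (hp2 : 2 ≤ p) {r : Fin p → ℕ}
    (e : ∀ l : Fin p, Fin (r l) → Fin (p - 1) → ZMod p)
    (b : ∀ l : Fin p, Fin (r l) → TreeAut p)
    (hdatum : IsMultiEGSDatum p e b) (l : Fin p) :
    ((Bsub p b l : Subgroup (TreeAut p)) : Set (TreeAut p)).Finite := by
  classical
  have hinv := Bsub_inv hp2 e b hdatum l
  set Φ : TreeAut p → (Fin p → TreeAut p) :=
    fun g x => if x = l then 1 else g.sect x with hΦ
  apply Set.Finite.of_finite_image (f := Φ)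
  · apply Set.Finite.subset (Set.Finite.pi
      (t := fun _ : Fin p => (Subgroup.zpowers (rot p) : Set (TreeAut p)))
      (fun _ => zpowers_rot_finite))
    rintro f ⟨g, hgs, rfl⟩
    intro x _
    by_cases hx : x = l
    · simp [hΦ, hx]
    · simpa [hΦ, hx] using (hinv g hgs).2.2 x hx
  · intro g hgs h hhs heq
    obtain ⟨hg1, hgl, hgo⟩ := hinv g hgs
    obtain ⟨hh1, hhl, hho⟩ := hinv h hhs
    apply eq_of_matching l hg1 hh1 hgl hhl
    intro x hx
    have := congrFun heq x
    simpa [hΦ, hx] using this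

lemma sectV_append (g : TreeAut p) (u w : List (Fin p)) :
    g.sectV (u ++ w) = (g.sectV u).sectV w := by
  induction u generalizing g with
  | nil => rfl
  | cons x u ih => exact ih (g.sect x)

lemma sectV_replicate {g : TreeAut p} {l : Fin p} (hg : g.sect l = g) :
    ∀ k, g.sectV (List.replicate k l) = g
  | 0 => rfl
  | k + 1 => by
    rw [List.replicate_succ]
    show (g.sect l).sectV (List.replicate k l) = g
    rw [hg]
    exact sectV_replicate hg k

end Aux

/-- **Theorem B (contracting property and nucleus of multi-EGS groups).**
For an odd prime `p`, the multi-EGS group `G_E` defined by a datum `E` is a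
contracting group whose nucleus is `N_E = ⟨a⟩ ∪ ⋃_{l=1}^p ⟨b^(l)_i : 1 ≤ i ≤ r_l⟩`:
`N_E` is the inclusion-minimal finite subset `N ⊆ G_E` for which there is `k ≥ 1`
such that every section at level `k` of a product of two elements of `S ∪ N` lies
in `N`, where `S = ⟨a⟩ ∪ ⋃_l ⟨b^(l)_i⟩` is the symmetric generating set. -/
theorem multiEGS_contracting_nucleus (p : ℕ) [Fact p.Prime] [NeZero p] (hp : Odd p)
    (r : Fin p → ℕ)
    (e : ∀ l : Fin p, Fin (r l) → Fin (p - 1) → ZMod p)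
    (b : ∀ l : Fin p, Fin (r l) → TreeAut p)
    (hdatum : IsMultiEGSDatum p e b) :
    IsNucleusOf p (nucleusSet p b) (multiEGS p b) (nucleusSet p b) := by
  classical
  have hp2 : 2 ≤ p := (Fact.out : p.Prime).two_le
  have hinv := fun l => Bsub_inv hp2 e b hdatum l
  have hmemN : ∀ g, g ∈ nucleusSet p b ↔
      g ∈ Subgroup.zpowers (rot p) ∨ ∃ l, g ∈ Bsub p b l := by
    intro g
    simp [nucleusSet, Set.mem_union, Set.mem_iUnion, SetLike.mem_coe]
  have h1N : (1 : TreeAut p) ∈ nucleusSet p b := (hmemN 1).mpr (Or.inl (one_mem _))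
  have hsectN : ∀ g ∈ nucleusSet p b, ∀ x, g.sect x ∈ nucleusSet p b := by
    intro g hg x
    rcases (hmemN g).mp hg with hz | ⟨l, hl⟩
    · rw [zpowers_sect hz]
      exact h1N
    · by_cases hx : x = l
      · rw [hx, (hinv l g hl).2.1]
        exact hg
      · exact (hmemN _).mpr (Or.inl ((hinv l g hl).2.2 x hx))
  have key1 : ∀ v w, v ∈ nucleusSet p b → w ∈ nucleusSet p b →
      (v ∈ Subgroup.zpowers (rot p) ∨ w ∈ Subgroup.zpowers (rot p) ∨
        ∃ l, v ∈ Bsub p b l ∧ w ∈ Bsub p b l) →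
      ∀ x, (v * w).sect x ∈ nucleusSet p b := by
    intro v w hv hw hcase x
    rcases hcase with hvZ | hwZ | ⟨l, hvl, hwl⟩
    · rw [TreeAut.sect_mul, zpowers_sect hvZ, one_mul]
      exact hsectN w hw _
    · rw [TreeAut.sect_mul, zpowers_sect hwZ, mul_one]
      exact hsectN v hv _
    · exact hsectN (v * w) ((hmemN _).mpr (Or.inr ⟨l, mul_mem hvl hwl⟩)) x
  have key2 : ∀ n₁ n₂, n₁ ∈ nucleusSet p b → n₂ ∈ nucleusSet p b → ∀ x,
      ∃ v w, (n₁ * n₂).sect x = v * w ∧ v ∈ nucleusSet p b ∧ w ∈ nucleusSet p b ∧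
        (v ∈ Subgroup.zpowers (rot p) ∨ w ∈ Subgroup.zpowers (rot p) ∨
          ∃ l, v ∈ Bsub p b l ∧ w ∈ Bsub p b l) := by
    intro n₁ n₂ h1 h2 x
    rcases (hmemN n₁).mp h1 with hz1 | ⟨l₁, hb1⟩
    · refine ⟨1, (n₁ * n₂).sect x, (one_mul _).symm, h1N, ?_, Or.inl (one_mem _)⟩
      rw [TreeAut.sect_mul, zpowers_sect hz1, one_mul]
      exact hsectN n₂ h2 _
    rcases (hmemN n₂).mp h2 with hz2 | ⟨l₂, hb2⟩
    · refine ⟨(n₁ * n₂).sect x, 1, (mul_one _).symm, ?_, h1N,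
        Or.inr (Or.inl (one_mem _))⟩
      rw [TreeAut.sect_mul, zpowers_sect hz2, mul_one]
      exact hsectN n₁ h1 _
    by_cases hll : l₁ = l₂
    · subst hll
      have hu : n₁ * n₂ ∈ nucleusSet p b := (hmemN _).mpr (Or.inr ⟨l₁, mul_mem hb1 hb2⟩)
      exact ⟨(n₁ * n₂).sect x, 1, (mul_one _).symm, hsectN _ hu x, h1N,
        Or.inr (Or.inl (one_mem _))⟩
    · refine ⟨n₁.sect x, n₂.sect x, ?_, hsectN n₁ h1 x, hsectN n₂ h2 x, ?_⟩
      · rw [TreeAut.sect_mul, (hinv l₁ n₁ hb1).1]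
        simp
      · by_cases hx : x = l₁
        · subst hx
          exact Or.inr (Or.inl ((hinv l₂ n₂ hb2).2.2 _ hll))
        · exact Or.inl ((hinv l₁ n₁ hb1).2.2 x hx)
  constructor
  · refine ⟨?_, ?_, 2, by norm_num, ?_⟩
    · apply Set.union_subset
      · exact fun g hg => Subgroup.zpowers_le.mpr (rot_mem_multiEGS p b) hg
      · apply Set.iUnion_subset
        intro l g hg
        refine (Subgroup.closure_le (multiEGS p b)).mpr ?_ hg
        rintro x ⟨i, rfl⟩
        exact b_mem_multiEGS p b l i
    · exact Set.Finite.union zpowers_rot_finite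
        (Set.finite_iUnion (fun l => Bsub_finite hp2 e b hdatum l))
    · intro n₁ h1 n₂ h2 v hv
      rw [Set.union_self] at h1 h2
      rcases v with _ | ⟨x, _ | ⟨y, _ | ⟨z, t⟩⟩⟩
      · simp at hv
      · simp at hv
      · show ((n₁ * n₂).sect x).sect y ∈ nucleusSet p b
        obtain ⟨vv, ww, hvw, hv1, hw1, hcase⟩ := key2 n₁ n₂ h1 h2 x
        rw [hvw]
        exact key1 vv ww hv1 hw1 hcase y
      · simp at hv
  · intro N' hsub hfin hqex
    obtain ⟨k, hk, hq⟩ := hqex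
    intro g hg
    have h1S : (1 : TreeAut p) ∈ nucleusSet p b ∪ N' := Set.mem_union_left _ h1N
    rcases (hmemN g).mp hg with hz | ⟨l, hl⟩
    · obtain ⟨lp, hlp⟩ := hdatum.1
      set i : Fin (r lp) := ⟨0, hlp⟩ with hi
      have hne : e lp i ≠ 0 := (hdatum.2.1 lp).ne_zero i
      obtain ⟨n, hn⟩ := Function.ne_iff.mp hne
      have hn' : e lp i n ≠ 0 := by simpa using hn
      obtain ⟨j, hj⟩ := Subgroup.mem_zpowers_iff.mp hz
      set c : ZMod p := e lp i n with hc
      set t : ZMod p := (j : ZMod p) * c⁻¹ with ht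
      have hgen : b lp i ∈ {g : TreeAut p | ∃ i', b lp i' = g} := ⟨i, rfl⟩
      have hhB : (b lp i) ^ t.val ∈ Bsub p b lp :=
        pow_mem (Subgroup.subset_closure hgen) t.val
      set h : TreeAut p := (b lp i) ^ t.val with hhdef
      have hhS : h ∈ nucleusSet p b ∪ N' :=
        Set.mem_union_left _ ((hmemN h).mpr (Or.inr ⟨lp, hhB⟩))
      set x : Fin p := lp + Fin.ofNat p (n.val + 1 : ℕ) with hx
      set v : List (Fin p) := List.replicate (k - 1) lp ++ [x] with hv
      have hlen : v.length = k := by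
        simp [hv]
        omega
      have hmem := hq h hhS 1 h1S v hlen
      rw [mul_one] at hmem
      have hb1 : (b lp i).perm [] = 1 := perm_nil_of_act _ (hdatum.2.2 lp i).1
      have hsv : h.sectV v = g := by
        have hrep : h.sectV (List.replicate (k - 1) lp) = h :=
          sectV_replicate ((hinv lp h hhB).2.1) _
        rw [hv, sectV_append, hrep]
        show h.sect x = g
        have hbx := (hdatum.2.2 lp i).2.2 n
        calc h.sect x = ((b lp i).sect x) ^ t.val := sect_pow hb1 x t.val
          _ = ((rot p) ^ (c.val)) ^ t.val := by rw [hx, hbx]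
          _ = (rot p) ^ (c.val * t.val) := by rw [← pow_mul]
          _ = (rot p) ^ j := by
              apply rot_pow_congr_int
              push_cast
              rw [ZMod.natCast_val, ZMod.natCast_val, ZMod.cast_id, ZMod.cast_id, ht]
              calc c * ((j : ZMod p) * c⁻¹) = (j : ZMod p) * (c * c⁻¹) := by ring
                _ = (j : ZMod p) := by rw [mul_inv_cancel₀ hn', mul_one]
          _ = g := hj
      rw [hsv] at hmem
      exact hmem
    · have hgS : g ∈ nucleusSet p b ∪ N' :=
        Set.mem_union_left _ ((hmemN g).mpr (Or.inr ⟨l, hl⟩))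
      have hmem := hq g hgS 1 h1S (List.replicate k l) (by simp)
      rw [mul_one, sectV_replicate ((hinv l g hl).2.1)] at hmem
      exact hmem
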